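/- Let Q(x,y) = ‖x‖² − ‖y‖² on ℝᵘ × ℝˢ, λ̄ > 1 and L > 0. Suppose (Aₖ)_{k≥0} is a sequence of linear maps on ℝⁿ with Q(Aₖ v) − λ̄ Q(v) ≥ L‖v‖² for all v ∈ ℝⁿ and all k. Then there exist c > 0 and λ > 1 (one may take λ = λ̄^{1/2} and c = (L)^{1/2}/λ) such that for every u with Q(u) > 0 and every k ≥ 1, ‖A_{k−1} ⋯ A₀ u‖ ≥ c λᵏ ‖u‖. -/

import Mathlib

theorem stmt7 (nu ns : ℕ)
    (Q : EuclideanSpace ℝ (Fin nu) × EuclideanSpace ℝ (Fin ns) → ℝ)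
    (hQ : ∀ v, Q v = ‖v.1‖ ^ 2 - ‖v.2‖ ^ 2)
    (lamBar L : ℝ) (hlam : lamBar > 1) (hL : L > 0)
    (A : ℕ → ((EuclideanSpace ℝ (Fin nu) × EuclideanSpace ℝ (Fin ns)) →ₗ[ℝ]
        (EuclideanSpace ℝ (Fin nu) × EuclideanSpace ℝ (Fin ns))))
    (hA : ∀ k, ∀ v, Q (A k v) - lamBar * Q v ≥ L * ‖v‖ ^ 2) :
    ∃ c > 0, ∃ lam > 1,
      ∀ u : EuclideanSpace ℝ (Fin nu) × EuclideanSpace ℝ (Fin ns), Q u > 0 →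
      ∀ w : ℕ → EuclideanSpace ℝ (Fin nu) × EuclideanSpace ℝ (Fin ns),
        w 0 = u → (∀ j, w (j + 1) = A j (w j)) →
        ∀ k ≥ 1, ‖w k‖ ≥ c * lam ^ k * ‖u‖ := by
  have hlam0 : (0:ℝ) < lamBar := lt_trans one_pos hlam
  set lam := Real.sqrt lamBar with hlamdef
  have hlam1 : 1 < lam := by
    rw [hlamdef, show (1:ℝ) = Real.sqrt 1 by simp]
    exact Real.sqrt_lt_sqrt zero_le_one hlam
  have hlampos : 0 < lam := lt_trans one_pos hlam1
  set c := Real.sqrt L / lam with hcdef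
  have hcpos : 0 < c := div_pos (Real.sqrt_pos.mpr hL) hlampos
  refine ⟨c, hcpos, lam, hlam1, ?_⟩
  intro u hQu w hw0 hwrec k hk
  -- key lower bound on Q(w k)
  have key : ∀ k, 1 ≤ k → Q (w k) ≥ lamBar ^ (k - 1) * L * ‖u‖ ^ 2 := by
    intro k hk
    induction k with
    | zero => omega
    | succ n ih =>
      rcases Nat.eq_zero_or_pos n with hn | hn
      · subst hn
        rw [hwrec 0, hw0]
        norm_num
        nlinarith [hA 0 u, hQu, mul_pos hlam0 hQu]
      · have h := hA n (w n)
        have hQn := ih hn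
        rw [hwrec n]
        have hnorm : (0:ℝ) ≤ L * ‖w n‖ ^ 2 := by positivity
        have hpow : lamBar ^ (n + 1 - 1) = lamBar * lamBar ^ (n - 1) := by
          rw [show n + 1 - 1 = (n - 1) + 1 by omega, pow_succ]; ring
        rw [hpow]
        nlinarith [pow_pos hlam0 (n-1), sq_nonneg ‖u‖]
  have hQk := key k hk
  -- ‖w k‖ ^ 2 ≥ Q (w k)
  have hsq : ‖w k‖ ^ 2 ≥ lamBar ^ (k - 1) * L * ‖u‖ ^ 2 := by
    have h1 : ‖(w k).1‖ ≤ ‖w k‖ := norm_fst_le (w k)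
    have h2 : Q (w k) ≤ ‖w k‖ ^ 2 := by
      rw [hQ]
      nlinarith [sq_nonneg ‖(w k).2‖, norm_nonneg (w k).1, norm_nonneg (w k)]
    linarith
  -- show (c * lam ^ k * ‖u‖)^2 = lamBar ^ (k-1) * L * ‖u‖^2
  have heq : (c * lam ^ k * ‖u‖) ^ 2 = lamBar ^ (k - 1) * L * ‖u‖ ^ 2 := by
    have hlsq : lam ^ 2 = lamBar := Real.sq_sqrt hlam0.le
    have hLsq : (Real.sqrt L) ^ 2 = L := Real.sq_sqrt hL.le
    have hkk : lam ^ k = lam * lam ^ (k - 1) := by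
      rw [← pow_succ']; congr 1; omega
    have hsq2 : (lam ^ (k - 1)) ^ 2 = lamBar ^ (k - 1) := by
      rw [← pow_mul, mul_comm, pow_mul, hlsq]
    have h1 : c * lam ^ k = Real.sqrt L * lam ^ (k - 1) := by
      rw [hcdef, hkk]; field_simp
    rw [h1, mul_pow, mul_pow, hLsq, hsq2]; ring
  have hnn : 0 ≤ c * lam ^ k * ‖u‖ := by positivity
  nlinarith [hsq, heq, norm_nonneg (w k)]
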